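/- Let a = (a₁, a₂) with a₁ ≥ a₂ ≥ 0 and b be a content vector with |b| = a₁ + a₂. Set λ = (a₁ + a₂, a₂). There is a bijection between the set of semistandard Young tableaux of content b whose shape λ̌ is a two-row partition dominating a, and the set of semistandard Young tableaux of shape λ and content (b₁, …, b_k, a₂), given by appending the entry k+1 to all cells of λ not in λ̌. -/

import Mathlib

open Finset

/-- The two-row Young diagram with row lengths `l1` (top) and `l2` (bottom).
In intended uses `l2 ≤ l1`. -/
def twoRow (l1 l2 : ℕ) : YoungDiagram :=
  YoungDiagram.ofRowLens [max l1 l2, l2] (by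
    simp [List.sortedGE_iff_pairwise, le_max_right])

/-- The number of cells of `T` with entry `v` (entries are 0-indexed). -/
def content {sh : YoungDiagram} (T : SemistandardYoungTableau sh) (v : ℕ) : ℕ :=
  (sh.cells.filter fun c => T c.1 c.2 = v).card

/-- Kostka number: the number of semistandard Young tableaux of shape `sh`
with content `c` (entries 0-indexed: `c v` copies of entry `v`). -/
noncomputable def kostka (sh : YoungDiagram) (c : ℕ → ℕ) : ℕ :=
  Nat.card {T : SemistandardYoungTableau sh // ∀ v, content T v = c v}

/-- A skew semistandard tableau on the skew shape whose `i`-th row occupies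
columns `[lo i, lo i + len i)`: rows weakly increase, columns strictly increase,
entries vanish off the shape. -/
structure SkewTab (lo len : ℕ → ℕ) where
  entry : ℕ → ℕ → ℕ
  rowWeak : ∀ i j1 j2, lo i ≤ j1 → j1 ≤ j2 → j2 < lo i + len i → entry i j1 ≤ entry i j2
  colStrict : ∀ i j, lo i ≤ j → j < lo i + len i → lo (i + 1) ≤ j →
    j < lo (i + 1) + len (i + 1) → entry i j < entry (i + 1) j
  zeros : ∀ i j, ¬(lo i ≤ j ∧ j < lo i + len i) → entry i j = 0

/-- The reading word: each row read right to left, rows top to bottom. -/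
def readWord (lo len : ℕ → ℕ) (rows : ℕ) (T : SkewTab lo len) : List ℕ :=
  (List.range rows).flatMap fun i =>
    (List.range (len i)).reverse.map fun t => T.entry i (lo i + t)

/-- A word is a lattice word: every prefix has at least as many `v`'s as `(v+1)`'s. -/
def IsLattice (w : List ℕ) : Prop := ∀ n v, (w.take n).count (v + 1) ≤ (w.take n).count v

/-- Number of copies of `v` in row `i` of the skew tableau `T`. -/
def rowContent (lo len : ℕ → ℕ) (T : SkewTab lo len) (i v : ℕ) : ℕ :=
  ((Finset.Ico (lo i) (lo i + len i)).filter fun j => T.entry i j = v).card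

/-- Total number of copies of `v` in the skew tableau `T` (with `rows` rows). -/
def skewContent (lo len : ℕ → ℕ) (rows : ℕ) (T : SkewTab lo len) (v : ℕ) : ℕ :=
  ∑ i ∈ Finset.range rows, rowContent lo len T i v

/-- Left endpoints of the rows of the skew shape `λ*α` where `λ = (l1, l2)` and
`α` has `m` rows: the `m` rows of `α` start at column `l1`, the two rows of `λ` at column 0. -/
def starLo (l1 m : ℕ) (i : ℕ) : ℕ := if i < m then l1 else 0

/-- Row lengths of the skew shape `λ*α`, `λ = (l1, l2)`, `α` with `m` rows. -/
def starLen (l1 l2 : ℕ) (a : ℕ → ℕ) (m : ℕ) (i : ℕ) : ℕ :=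
  if i < m then a i else if i = m then l1 else if i = m + 1 then l2 else 0

lemma mem_twoRow {l1 l2 i j : ℕ} (h : l2 ≤ l1) :
    (i, j) ∈ twoRow l1 l2 ↔ (i = 0 ∧ j < l1) ∨ (i = 1 ∧ j < l2) := by
  rw [twoRow, YoungDiagram.mem_ofRowLens]
  constructor
  · rintro ⟨hi, hj⟩
    simp only [List.length] at hi
    interval_cases i
    · left; simp_all [max_eq_left h]
    · right; simp_all
  · rintro (⟨rfl, hj⟩ | ⟨rfl, hj⟩)
    · exact ⟨by norm_num, by simpa [max_eq_left h]⟩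
    · exact ⟨by norm_num, by simpa⟩

lemma content_twoRow {l1 l2 : ℕ} (h : l2 ≤ l1) (T : SemistandardYoungTableau (twoRow l1 l2))
    (v : ℕ) : content T v =
      ((range l1).filter fun j => T 0 j = v).card +
      ((range l2).filter fun j => T 1 j = v).card := by
  classical
  rw [content]
  have : (twoRow l1 l2).cells.filter (fun c => T c.1 c.2 = v) =
      (((range l1).filter fun j => T 0 j = v).map ⟨fun j => ((0:ℕ), j), Prod.mk_right_injective _⟩) ∪
      (((range l2).filter fun j => T 1 j = v).map ⟨fun j => ((1:ℕ), j), Prod.mk_right_injective _⟩) := by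
    ext ⟨i, j⟩
    simp only [mem_filter, YoungDiagram.mem_cells, mem_union, mem_map,
      Function.Embedding.coeFn_mk, mem_range, Prod.mk.injEq]
    rw [mem_twoRow h]
    aesop
  rw [this, card_union_of_disjoint, card_map, card_map]
  simp only [Finset.disjoint_left, mem_map, Function.Embedding.coeFn_mk, mem_filter,
    mem_range, not_exists, not_and, forall_exists_index, and_imp, Prod.mk.injEq, Prod.forall]
  rintro a b x _ _ rfl rfl y _ _ h1
  omega

lemma content_ne_zero {sh : YoungDiagram} (T : SemistandardYoungTableau sh) {i j : ℕ}
    (h : (i, j) ∈ sh) : content T (T i j) ≠ 0 :=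
  Finset.card_ne_zero_of_mem (Finset.mem_filter.2 ⟨(YoungDiagram.mem_cells _).2 h, rfl⟩)

lemma eq_range_card {S : Finset ℕ} (h : ∀ x ∈ S, ∀ y, y ≤ x → y ∈ S) :
    S = range S.card := by
  have hsub : S ⊆ range S.card := by
    intro x hx
    rw [mem_range]
    have hr : range (x + 1) ⊆ S := by
      intro y hy
      exact h x hx y (by rw [mem_range] at hy; omega)
    have := Finset.card_le_card hr
    simpa using this
  exact Finset.eq_of_subset_of_card_le hsub (by simp)

section Main
variable (a1 a2 k : ℕ)

/-- The extension map. -/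
def extT (c1 c2 : ℕ) (h21 : c2 ≤ c1) (hcs : c1 + c2 = a1 + a2) (ha1 : a1 ≤ c1) (ha : a2 ≤ a1)
    (T : SemistandardYoungTableau (twoRow c1 c2))
    (hTk : ∀ i j, (i, j) ∈ twoRow c1 c2 → T i j < k) :
    SemistandardYoungTableau (twoRow (a1 + a2) a2) where
  entry i j := if (i, j) ∈ twoRow c1 c2 then T i j
    else if (i, j) ∈ twoRow (a1 + a2) a2 then k else 0
  row_weak' := by
    intro i j1 j2 hj hcell
    by_cases h2 : (i, j2) ∈ twoRow c1 c2
    · have h1 : (i, j1) ∈ twoRow c1 c2 := by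
        rw [mem_twoRow h21] at h2 ⊢; omega
      rw [if_pos h1, if_pos h2]
      exact T.row_weak hj h2
    · rw [if_neg h2, if_pos hcell]
      split_ifs with h1
      exacts [(hTk _ _ h1).le, le_rfl, Nat.zero_le k]
  col_strict' := by
    intro i1 i2 j hlt hcell
    rcases (mem_twoRow (Nat.le_add_left a2 a1)).1 hcell with ⟨h0, hj⟩ | ⟨h1, hj⟩
    · omega
    · subst h1
      have hi1 : i1 = 0 := by omega
      subst hi1
      have h0m : (0, j) ∈ twoRow c1 c2 := (mem_twoRow h21).2 (Or.inl ⟨rfl, by omega⟩)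
      rw [if_pos h0m]
      by_cases h1m : (1, j) ∈ twoRow c1 c2
      · rw [if_pos h1m]; exact T.col_strict one_pos h1m
      · rw [if_neg h1m, if_pos hcell]; exact hTk _ _ h0m
  zeros' := by
    intro i j hn
    have : (i, j) ∉ twoRow c1 c2 := by
      intro h
      exact hn (by rw [mem_twoRow h21] at h; rw [mem_twoRow (Nat.le_add_left a2 a1)]; omega)
    rw [if_neg this, if_neg hn]

lemma extT_apply (c1 c2 : ℕ) (h21 : c2 ≤ c1) (hcs : c1 + c2 = a1 + a2) (ha1 : a1 ≤ c1)
    (ha : a2 ≤ a1) (T : SemistandardYoungTableau (twoRow c1 c2))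
    (hTk : ∀ i j, (i, j) ∈ twoRow c1 c2 → T i j < k) (i j : ℕ) :
    extT a1 a2 k c1 c2 h21 hcs ha1 ha T hTk i j =
      if (i, j) ∈ twoRow c1 c2 then T i j
      else if (i, j) ∈ twoRow (a1 + a2) a2 then k else 0 := rfl

lemma content_extT (c1 c2 : ℕ) (h21 : c2 ≤ c1) (hcs : c1 + c2 = a1 + a2) (ha1 : a1 ≤ c1)
    (ha : a2 ≤ a1) (T : SemistandardYoungTableau (twoRow c1 c2))
    (hTk : ∀ i j, (i, j) ∈ twoRow c1 c2 → T i j < k) (b : Fin k → ℕ)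
    (hb : ∀ v, content T v = if h : v < k then b ⟨v, h⟩ else 0) (v : ℕ) :
    content (extT a1 a2 k c1 c2 h21 hcs ha1 ha T hTk) v =
      if h : v < k then b ⟨v, h⟩ else if v = k then a2 else 0 := by
  classical
  have hc1L : c1 ≤ a1 + a2 := by omega
  have hc2a : c2 ≤ a2 := by omega
  set E := extT a1 a2 k c1 c2 h21 hcs ha1 ha T hTk with hE
  rw [content_twoRow (Nat.le_add_left a2 a1)]
  have hr0 : ((range (a1 + a2)).filter fun j => E 0 j = v).card
      = ((range c1).filter fun j => T 0 j = v).card + (if v = k then a1 + a2 - c1 else 0) := by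
    have hsplit : range (a1 + a2) = range c1 ∪ Ico c1 (a1 + a2) := by
      simp only [range_eq_Ico]
      exact (Finset.Ico_union_Ico_eq_Ico (Nat.zero_le _) hc1L).symm
    rw [hsplit, filter_union, card_union_of_disjoint (by
      simp only [Finset.disjoint_left, mem_filter, mem_range, mem_Ico]
      rintro x ⟨hx, -⟩ ⟨hx2, -⟩; omega)]
    congr 1
    · refine congrArg Finset.card (filter_congr ?_)
      intro j hj
      rw [mem_range] at hj
      rw [hE, extT_apply, if_pos ((mem_twoRow h21).2 (Or.inl ⟨rfl, hj⟩))]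
    · have : ((Ico c1 (a1 + a2)).filter fun j => E 0 j = v) =
          if v = k then Ico c1 (a1 + a2) else ∅ := by
        rw [filter_congr (q := fun _ => k = v) (fun j hj => by
          rw [mem_Ico] at hj
          rw [hE, extT_apply, if_neg (by rw [mem_twoRow h21]; omega),
            if_pos ((mem_twoRow (Nat.le_add_left a2 a1)).2 (Or.inl ⟨rfl, hj.2⟩))])]
        rw [Finset.filter_const]
        split_ifs with h1 h2 h2 <;> first | rfl | omega
      rw [this]
      split_ifs <;> simp [Nat.card_Ico]
  have hr1 : ((range a2).filter fun j => E 1 j = v).card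
      = ((range c2).filter fun j => T 1 j = v).card + (if v = k then a2 - c2 else 0) := by
    have hsplit : range a2 = range c2 ∪ Ico c2 a2 := by
      simp only [range_eq_Ico]
      exact (Finset.Ico_union_Ico_eq_Ico (Nat.zero_le _) hc2a).symm
    rw [hsplit, filter_union, card_union_of_disjoint (by
      simp only [Finset.disjoint_left, mem_filter, mem_range, mem_Ico]
      rintro x ⟨hx, -⟩ ⟨hx2, -⟩; omega)]
    congr 1
    · refine congrArg Finset.card (filter_congr ?_)
      intro j hj
      rw [mem_range] at hj
      rw [hE, extT_apply, if_pos ((mem_twoRow h21).2 (Or.inr ⟨rfl, hj⟩))]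
    · have : ((Ico c2 a2).filter fun j => E 1 j = v) =
          if v = k then Ico c2 a2 else ∅ := by
        rw [filter_congr (q := fun _ => k = v) (fun j hj => by
          rw [mem_Ico] at hj
          rw [hE, extT_apply, if_neg (by rw [mem_twoRow h21]; omega),
            if_pos ((mem_twoRow (Nat.le_add_left a2 a1)).2 (Or.inr ⟨rfl, hj.2⟩))])]
        rw [Finset.filter_const]
        split_ifs with h1 h2 h2 <;> first | rfl | omega
      rw [this]
      split_ifs <;> simp [Nat.card_Ico]
  rw [hr0, hr1]
  have hTv := (content_twoRow h21 T v).symm.trans (hb v)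
  by_cases hv : v < k
  · have hvk : v ≠ k := by omega
    rw [dif_pos hv] at hTv ⊢
    rw [if_neg hvk, if_neg hvk]
    omega
  · rw [dif_neg hv] at hTv ⊢
    by_cases hvk : v = k
    · rw [if_pos hvk, if_pos hvk, if_pos hvk]
      omega
    · rw [if_neg hvk, if_neg hvk, if_neg hvk]
      omega

/-- entries of a tableau with the extended content are at most `k`. -/
lemma le_k_of_content (T : SemistandardYoungTableau (twoRow (a1 + a2) a2)) (b : Fin k → ℕ)
    (hT : ∀ v, content T v = if h : v < k then b ⟨v, h⟩ else if v = k then a2 else 0)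
    {i j : ℕ} (h : (i, j) ∈ twoRow (a1 + a2) a2) : T i j ≤ k := by
  by_contra hgt
  push_neg at hgt
  have h0 := content_ne_zero T h
  rw [hT] at h0
  rw [dif_neg (by omega), if_neg (by omega)] at h0
  exact h0 rfl

/-- entries of a tableau with content `b` are less than `k`. -/
lemma lt_k_of_content {c1 c2 : ℕ} (h21 : c2 ≤ c1) (T : SemistandardYoungTableau (twoRow c1 c2))
    (b : Fin k → ℕ) (hT : ∀ v, content T v = if h : v < k then b ⟨v, h⟩ else 0)
    {i j : ℕ} (h : (i, j) ∈ twoRow c1 c2) : T i j < k := by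
  by_contra hge
  push_neg at hge
  have h0 := content_ne_zero T h
  rw [hT, dif_neg (by omega)] at h0
  exact h0 rfl

def invC1 (T : SemistandardYoungTableau (twoRow (a1 + a2) a2)) : ℕ :=
  ((range (a1 + a2)).filter fun j => ¬(T 0 j = k)).card

def invC2 (T : SemistandardYoungTableau (twoRow (a1 + a2) a2)) : ℕ :=
  ((range a2).filter fun j => ¬(T 1 j = k)).card

lemma invChar0 (T : SemistandardYoungTableau (twoRow (a1 + a2) a2)) (b : Fin k → ℕ)
    (hT : ∀ v, content T v = if h : v < k then b ⟨v, h⟩ else if v = k then a2 else 0) (j : ℕ) :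
    j < invC1 a1 a2 k T ↔ (j < a1 + a2 ∧ T 0 j ≠ k) := by
  have hdc := eq_range_card (S := (range (a1 + a2)).filter fun j => ¬(T 0 j = k)) (by
    intro x hx y hy
    rw [mem_filter, mem_range] at hx ⊢
    have hmx : ((0:ℕ), x) ∈ twoRow (a1 + a2) a2 :=
      (mem_twoRow (Nat.le_add_left a2 a1)).2 (Or.inl ⟨rfl, hx.1⟩)
    have h1 : T 0 y ≤ T 0 x := T.row_weak_of_le hy hmx
    have h2 : T 0 x ≤ k := le_k_of_content a1 a2 k T b hT hmx
    exact ⟨by omega, by omega⟩)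
  constructor
  · intro hj
    have : j ∈ (range (a1 + a2)).filter fun j => ¬(T 0 j = k) := by
      rw [hdc, mem_range]; exact hj
    rw [mem_filter, mem_range] at this
    exact this
  · intro ⟨h1, h2⟩
    have : j ∈ (range (a1 + a2)).filter fun j => ¬(T 0 j = k) :=
      mem_filter.2 ⟨mem_range.2 h1, h2⟩
    rw [hdc, mem_range] at this
    exact this

lemma invChar1 (T : SemistandardYoungTableau (twoRow (a1 + a2) a2)) (b : Fin k → ℕ)
    (hT : ∀ v, content T v = if h : v < k then b ⟨v, h⟩ else if v = k then a2 else 0) (j : ℕ) :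
    j < invC2 a1 a2 k T ↔ (j < a2 ∧ T 1 j ≠ k) := by
  have hdc := eq_range_card (S := (range a2).filter fun j => ¬(T 1 j = k)) (by
    intro x hx y hy
    rw [mem_filter, mem_range] at hx ⊢
    have hmx : ((1:ℕ), x) ∈ twoRow (a1 + a2) a2 :=
      (mem_twoRow (Nat.le_add_left a2 a1)).2 (Or.inr ⟨rfl, hx.1⟩)
    have h1 : T 1 y ≤ T 1 x := T.row_weak_of_le hy hmx
    have h2 : T 1 x ≤ k := le_k_of_content a1 a2 k T b hT hmx
    exact ⟨by omega, by omega⟩)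
  constructor
  · intro hj
    have : j ∈ (range a2).filter fun j => ¬(T 1 j = k) := by
      rw [hdc, mem_range]; exact hj
    rw [mem_filter, mem_range] at this
    exact this
  · intro ⟨h1, h2⟩
    have : j ∈ (range a2).filter fun j => ¬(T 1 j = k) :=
      mem_filter.2 ⟨mem_range.2 h1, h2⟩
    rw [hdc, mem_range] at this
    exact this

lemma invC_facts (ha : a2 ≤ a1) (T : SemistandardYoungTableau (twoRow (a1 + a2) a2))
    (b : Fin k → ℕ)
    (hT : ∀ v, content T v = if h : v < k then b ⟨v, h⟩ else if v = k then a2 else 0) :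
    invC2 a1 a2 k T ≤ invC1 a1 a2 k T ∧
      invC1 a1 a2 k T + invC2 a1 a2 k T = a1 + a2 ∧ a1 ≤ invC1 a1 a2 k T := by
  classical
  have hA := Finset.card_filter_add_card_filter_not
    (s := range (a1 + a2)) (p := fun j => T 0 j = k)
  have hB := Finset.card_filter_add_card_filter_not
    (s := range a2) (p := fun j => T 1 j = k)
  rw [Finset.card_range] at hA hB
  have hk : content T k = a2 := by
    rw [hT k, dif_neg (lt_irrefl k), if_pos rfl]
  rw [content_twoRow (Nat.le_add_left a2 a1)] at hk
  have h21 : invC2 a1 a2 k T ≤ invC1 a1 a2 k T := by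
    by_contra hcon
    push_neg at hcon
    have hj := (invChar1 a1 a2 k T b hT (invC1 a1 a2 k T)).1 hcon
    have hcell : ((1:ℕ), invC1 a1 a2 k T) ∈ twoRow (a1 + a2) a2 :=
      (mem_twoRow (Nat.le_add_left a2 a1)).2 (Or.inr ⟨rfl, hj.1⟩)
    have hcol : T 0 (invC1 a1 a2 k T) < T 1 (invC1 a1 a2 k T) := T.col_strict one_pos hcell
    have hle : T 1 (invC1 a1 a2 k T) ≤ k := le_k_of_content a1 a2 k T b hT hcell
    have : invC1 a1 a2 k T < invC1 a1 a2 k T :=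
      (invChar0 a1 a2 k T b hT _).2 ⟨by omega, by omega⟩
    omega
  refine ⟨h21, ?_, ?_⟩ <;> unfold invC1 invC2 at * <;> omega

def resT (c1 c2 : ℕ) (h21 : c2 ≤ c1) (hc1 : c1 ≤ a1 + a2) (hc2 : c2 ≤ a2)
    (T : SemistandardYoungTableau (twoRow (a1 + a2) a2)) :
    SemistandardYoungTableau (twoRow c1 c2) where
  entry i j := if (i, j) ∈ twoRow c1 c2 then T i j else 0
  row_weak' := by
    intro i j1 j2 hj hcell
    have h1 : (i, j1) ∈ twoRow c1 c2 := by
      rw [mem_twoRow h21] at hcell ⊢; omega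
    have hL : (i, j2) ∈ twoRow (a1 + a2) a2 := by
      rw [mem_twoRow h21] at hcell
      rw [mem_twoRow (Nat.le_add_left a2 a1)]; omega
    rw [if_pos h1, if_pos hcell]
    exact T.row_weak hj hL
  col_strict' := by
    intro i1 i2 j hlt hcell
    rcases (mem_twoRow h21).1 hcell with ⟨h0, hj⟩ | ⟨h1, hj⟩
    · omega
    · subst h1
      have hi1 : i1 = 0 := by omega
      subst hi1
      have h0m : (0, j) ∈ twoRow c1 c2 := (mem_twoRow h21).2 (Or.inl ⟨rfl, by omega⟩)
      have hL : ((1:ℕ), j) ∈ twoRow (a1 + a2) a2 :=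
        (mem_twoRow (Nat.le_add_left a2 a1)).2 (Or.inr ⟨rfl, by omega⟩)
      rw [if_pos h0m, if_pos hcell]
      exact T.col_strict one_pos hL
  zeros' := by
    intro i j hn
    rw [if_neg hn]

lemma resT_apply (c1 c2 : ℕ) (h21 : c2 ≤ c1) (hc1 : c1 ≤ a1 + a2) (hc2 : c2 ≤ a2)
    (T : SemistandardYoungTableau (twoRow (a1 + a2) a2)) (i j : ℕ) :
    resT a1 a2 c1 c2 h21 hc1 hc2 T i j = if (i, j) ∈ twoRow c1 c2 then T i j else 0 := rfl

lemma content_resT (T : SemistandardYoungTableau (twoRow (a1 + a2) a2)) (b : Fin k → ℕ)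
    (hT : ∀ v, content T v = if h : v < k then b ⟨v, h⟩ else if v = k then a2 else 0)
    (h21 : invC2 a1 a2 k T ≤ invC1 a1 a2 k T) (hc1 : invC1 a1 a2 k T ≤ a1 + a2)
    (hc2 : invC2 a1 a2 k T ≤ a2) (v : ℕ) :
    content (resT a1 a2 (invC1 a1 a2 k T) (invC2 a1 a2 k T) h21 hc1 hc2 T) v =
      if h : v < k then b ⟨v, h⟩ else 0 := by
  classical
  rw [content_twoRow h21]
  have he0 : ∀ j ∈ range (invC1 a1 a2 k T),
      (resT a1 a2 (invC1 a1 a2 k T) (invC2 a1 a2 k T) h21 hc1 hc2 T 0 j = v) ↔ (T 0 j = v) := by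
    intro j hj
    rw [mem_range] at hj
    rw [resT_apply, if_pos ((mem_twoRow h21).2 (Or.inl ⟨rfl, hj⟩))]
  have he1 : ∀ j ∈ range (invC2 a1 a2 k T),
      (resT a1 a2 (invC1 a1 a2 k T) (invC2 a1 a2 k T) h21 hc1 hc2 T 1 j = v) ↔ (T 1 j = v) := by
    intro j hj
    rw [mem_range] at hj
    rw [resT_apply, if_pos ((mem_twoRow h21).2 (Or.inr ⟨rfl, hj⟩))]
  rw [filter_congr he0, filter_congr he1]
  by_cases hvk : v = k
  · rw [Finset.card_eq_zero.2, Finset.card_eq_zero.2, dif_neg (by omega : ¬ v < k)]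
    · rw [Finset.eq_empty_iff_forall_notMem]
      intro j hj
      rw [mem_filter, mem_range] at hj
      exact ((invChar1 a1 a2 k T b hT j).1 hj.1).2 (hvk ▸ hj.2)
    · rw [Finset.eq_empty_iff_forall_notMem]
      intro j hj
      rw [mem_filter, mem_range] at hj
      exact ((invChar0 a1 a2 k T b hT j).1 hj.1).2 (hvk ▸ hj.2)
  · have h0 : ((range (invC1 a1 a2 k T)).filter fun j => T 0 j = v) =
        ((range (a1 + a2)).filter fun j => T 0 j = v) := by
      ext j
      simp only [mem_filter, mem_range]
      constructor
      · rintro ⟨hj, hv⟩; exact ⟨by omega, hv⟩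
      · rintro ⟨hj, hv⟩
        exact ⟨(invChar0 a1 a2 k T b hT j).2 ⟨hj, by rw [hv]; exact hvk⟩, hv⟩
    have h1 : ((range (invC2 a1 a2 k T)).filter fun j => T 1 j = v) =
        ((range a2).filter fun j => T 1 j = v) := by
      ext j
      simp only [mem_filter, mem_range]
      constructor
      · rintro ⟨hj, hv⟩; exact ⟨by omega, hv⟩
      · rintro ⟨hj, hv⟩
        exact ⟨(invChar1 a1 a2 k T b hT j).2 ⟨hj, by rw [hv]; exact hvk⟩, hv⟩
    rw [h0, h1, ← content_twoRow (Nat.le_add_left a2 a1), hT v]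
    by_cases hv : v < k
    · rw [dif_pos hv, dif_pos hv]
    · rw [dif_neg hv, dif_neg hv, if_neg hvk]


lemma invC1_le (T : SemistandardYoungTableau (twoRow (a1 + a2) a2)) :
    invC1 a1 a2 k T ≤ a1 + a2 :=
  le_trans (Finset.card_filter_le _ _) (le_of_eq (card_range _))

lemma invC2_le (T : SemistandardYoungTableau (twoRow (a1 + a2) a2)) :
    invC2 a1 a2 k T ≤ a2 :=
  le_trans (Finset.card_filter_le _ _) (le_of_eq (card_range _))

lemma invC1_extT (c1 c2 : ℕ) (h21 : c2 ≤ c1) (hcs : c1 + c2 = a1 + a2) (ha1 : a1 ≤ c1)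
    (ha : a2 ≤ a1) (T : SemistandardYoungTableau (twoRow c1 c2))
    (hTk : ∀ i j, (i, j) ∈ twoRow c1 c2 → T i j < k) :
    invC1 a1 a2 k (extT a1 a2 k c1 c2 h21 hcs ha1 ha T hTk) = c1 := by
  unfold invC1
  have h : ((range (a1 + a2)).filter
      fun j => ¬(extT a1 a2 k c1 c2 h21 hcs ha1 ha T hTk 0 j = k)) = range c1 := by
    ext j
    simp only [mem_filter, mem_range]
    constructor
    · rintro ⟨hj, hne⟩
      by_contra hj1
      apply hne
      rw [extT_apply, if_neg (by rw [mem_twoRow h21]; omega),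
        if_pos ((mem_twoRow (Nat.le_add_left a2 a1)).2 (Or.inl ⟨rfl, hj⟩))]
    · intro hj1
      have hm : ((0:ℕ), j) ∈ twoRow c1 c2 := (mem_twoRow h21).2 (Or.inl ⟨rfl, hj1⟩)
      refine ⟨by omega, ?_⟩
      rw [extT_apply, if_pos hm]
      exact Nat.ne_of_lt (hTk 0 j hm)
  rw [h, card_range]

lemma invC2_extT (c1 c2 : ℕ) (h21 : c2 ≤ c1) (hcs : c1 + c2 = a1 + a2) (ha1 : a1 ≤ c1)
    (ha : a2 ≤ a1) (T : SemistandardYoungTableau (twoRow c1 c2))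
    (hTk : ∀ i j, (i, j) ∈ twoRow c1 c2 → T i j < k) :
    invC2 a1 a2 k (extT a1 a2 k c1 c2 h21 hcs ha1 ha T hTk) = c2 := by
  unfold invC2
  have h : ((range a2).filter
      fun j => ¬(extT a1 a2 k c1 c2 h21 hcs ha1 ha T hTk 1 j = k)) = range c2 := by
    ext j
    simp only [mem_filter, mem_range]
    constructor
    · rintro ⟨hj, hne⟩
      by_contra hj1
      apply hne
      rw [extT_apply, if_neg (by rw [mem_twoRow h21]; omega),
        if_pos ((mem_twoRow (Nat.le_add_left a2 a1)).2 (Or.inr ⟨rfl, hj⟩))]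
    · intro hj1
      have hm : ((1:ℕ), j) ∈ twoRow c1 c2 := (mem_twoRow h21).2 (Or.inr ⟨rfl, hj1⟩)
      refine ⟨by omega, ?_⟩
      rw [extT_apply, if_pos hm]
      exact Nat.ne_of_lt (hTk 1 j hm)
  rw [h, card_range]

end Main

/-- Extension by the entry `k+1` (0-indexed: `k`) on the cells of
`λ = (a1 + a2, a2)` not in `λ̌` gives a bijection between SSYT of content `b` whose shape
`λ̌` is a two-row partition dominating `a`, and SSYT of shape `λ` with content `(b, a2)`. -/
theorem stmt4 (a1 a2 k : ℕ) (ha : a2 ≤ a1) (b : Fin k → ℕ)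
    (hsum : a1 + a2 = ∑ j, b j) :
    ∃ e : (Σ c : {c : ℕ × ℕ // c.2 ≤ c.1 ∧ c.1 + c.2 = a1 + a2 ∧ a1 ≤ c.1},
            {T : SemistandardYoungTableau (twoRow c.1.1 c.1.2) //
              ∀ v, content T v = if h : v < k then b ⟨v, h⟩ else 0}) ≃
          {T : SemistandardYoungTableau (twoRow (a1 + a2) a2) //
            ∀ v, content T v = if h : v < k then b ⟨v, h⟩ else if v = k then a2 else 0},
      ∀ p i j, (i, j) ∈ twoRow (a1 + a2) a2 →
        (e p : SemistandardYoungTableau (twoRow (a1 + a2) a2)) i j =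
          if (i, j) ∈ twoRow p.1.1.1 p.1.1.2 then
            (p.2 : SemistandardYoungTableau (twoRow p.1.1.1 p.1.1.2)) i j
          else k := by
  classical
  set f : (Σ c : {c : ℕ × ℕ // c.2 ≤ c.1 ∧ c.1 + c.2 = a1 + a2 ∧ a1 ≤ c.1},
      {T : SemistandardYoungTableau (twoRow c.1.1 c.1.2) //
        ∀ v, content T v = if h : v < k then b ⟨v, h⟩ else 0}) →
      {T : SemistandardYoungTableau (twoRow (a1 + a2) a2) //
        ∀ v, content T v = if h : v < k then b ⟨v, h⟩ else if v = k then a2 else 0} :=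
    fun p => ⟨extT a1 a2 k p.1.1.1 p.1.1.2 p.1.2.1 p.1.2.2.1 p.1.2.2.2 ha p.2.1
        (fun i j h => lt_k_of_content k p.1.2.1 p.2.1 b p.2.2 h),
      content_extT a1 a2 k p.1.1.1 p.1.1.2 p.1.2.1 p.1.2.2.1 p.1.2.2.2 ha p.2.1 _ b p.2.2⟩
    with hf
  have hinj : Function.Injective f := by
    rintro ⟨⟨⟨c1, c2⟩, hc21, hccs, hca1⟩, T, hT⟩ ⟨⟨⟨d1, d2⟩, hd21, hdcs, hda1⟩, S, hS⟩ heq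
    have hE := congrArg Subtype.val heq
    simp only [hf] at hE
    have e1 : c1 = d1 := by
      rw [← invC1_extT a1 a2 k c1 c2 hc21 hccs hca1 ha T (fun i j h => lt_k_of_content k hc21 T b hT h),
        ← invC1_extT a1 a2 k d1 d2 hd21 hdcs hda1 ha S (fun i j h => lt_k_of_content k hd21 S b hS h)]
      exact congrArg (invC1 a1 a2 k) hE
    have e2 : c2 = d2 := by
      rw [← invC2_extT a1 a2 k c1 c2 hc21 hccs hca1 ha T (fun i j h => lt_k_of_content k hc21 T b hT h),
        ← invC2_extT a1 a2 k d1 d2 hd21 hdcs hda1 ha S (fun i j h => lt_k_of_content k hd21 S b hS h)]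
      exact congrArg (invC2 a1 a2 k) hE
    subst e1
    subst e2
    have eT : T = S := by
      apply SemistandardYoungTableau.ext
      intro i j
      by_cases hm : (i, j) ∈ twoRow c1 c2
      · have h2 := congrArg (fun (X : SemistandardYoungTableau (twoRow (a1 + a2) a2)) => X i j) hE
        simpa only [extT_apply, if_pos hm] using h2
      · rw [T.zeros hm, S.zeros hm]
    subst eT
    rfl
  have hsurj : Function.Surjective f := by
    rintro ⟨T', hT'⟩
    obtain ⟨g1, g2, g3⟩ := invC_facts a1 a2 k ha T' b hT'
    refine ⟨⟨⟨(invC1 a1 a2 k T', invC2 a1 a2 k T'), g1, g2, g3⟩,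
      resT a1 a2 (invC1 a1 a2 k T') (invC2 a1 a2 k T') g1 (invC1_le a1 a2 k T')
        (invC2_le a1 a2 k T') T',
      content_resT a1 a2 k T' b hT' g1 (invC1_le a1 a2 k T') (invC2_le a1 a2 k T')⟩, ?_⟩
    apply Subtype.ext
    apply SemistandardYoungTableau.ext
    intro i j
    simp only [hf]
    rw [extT_apply]
    by_cases hm : (i, j) ∈ twoRow (invC1 a1 a2 k T') (invC2 a1 a2 k T')
    · rw [if_pos hm, resT_apply, if_pos hm]
    · rw [if_neg hm]
      by_cases hL : (i, j) ∈ twoRow (a1 + a2) a2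
      · rw [if_pos hL]
        rcases (mem_twoRow (Nat.le_add_left a2 a1)).1 hL with ⟨rfl, hj⟩ | ⟨rfl, hj⟩
        · have hnot : ¬ j < invC1 a1 a2 k T' := fun hc =>
            hm ((mem_twoRow g1).2 (Or.inl ⟨rfl, hc⟩))
          by_contra hne
          exact hnot ((invChar0 a1 a2 k T' b hT' j).2 ⟨hj, fun h => hne h.symm⟩)
        · have hnot : ¬ j < invC2 a1 a2 k T' := fun hc =>
            hm ((mem_twoRow g1).2 (Or.inr ⟨rfl, hc⟩))
          by_contra hne
          exact hnot ((invChar1 a1 a2 k T' b hT' j).2 ⟨hj, fun h => hne h.symm⟩)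
      · rw [if_neg hL]
        exact (T'.zeros hL).symm
  refine ⟨Equiv.ofBijective f ⟨hinj, hsurj⟩, ?_⟩
  rintro ⟨⟨⟨c1, c2⟩, hc21, hccs, hca1⟩, T, hT⟩ i j hij
  change (extT a1 a2 k c1 c2 hc21 hccs hca1 ha T
      (fun i j h => lt_k_of_content k hc21 T b hT h)) i j =
    if (i, j) ∈ twoRow c1 c2 then T i j else k
  rw [extT_apply]
  by_cases hm : (i, j) ∈ twoRow c1 c2
  · rw [if_pos hm, if_pos hm]
  · rw [if_neg hm, if_neg hm, if_pos hij]
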